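/- Let G₁ be a nontrivial finite cyclic group and G₂ a finite group with |G₁| and |G₂| coprime. Then the maximal Radon transform is not injective on G₁ × G₂: there exists a nonzero function f : G₁ × G₂ → ℂ such that for every maximal cyclic subgroup C of G₁ × G₂ and every x ∈ G₁ × G₂ one has ∑_{c ∈ C} f(x * c) = 0. -/

import Mathlib

/-- A subgroup is a maximal cyclic subgroup if it is cyclic and not properly
contained in any larger cyclic subgroup. -/
def IsMaximalCyclic {G : Type*} [Group G] (C : Subgroup G) : Prop :=
  IsCyclic C ∧ ∀ D : Subgroup G, IsCyclic D → C ≤ D → C = D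

/-- All maximal Radon transforms of `f` (sums over all cosets of maximal cyclic
subgroups) vanish. -/
def MaxRadonNull (G : Type*) [Group G] [Fintype G] (f : G → ℂ) : Prop :=
  ∀ C : Subgroup G, IsMaximalCyclic C → ∀ x : G,
    ∑ c ∈ (C : Set G).toFinite.toFinset, f (x * c) = 0

theorem max_radon_not_injective_of_cyclic_factor
    (G₁ G₂ : Type*) [Group G₁] [Group G₂] [Fintype G₁] [Fintype G₂]
    [IsCyclic G₁] [Nontrivial G₁]
    (h : Nat.Coprime (Fintype.card G₁) (Fintype.card G₂)) :
    ∃ f : G₁ × G₂ → ℂ, f ≠ 0 ∧ MaxRadonNull (G₁ × G₂) f := by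
  classical
  letI : CommGroup G₁ := IsCyclic.commGroup
  set n := Fintype.card G₁ with hn
  -- a nontrivial character χ : G₁ →* ℂ
  obtain ⟨a₀, ha₀⟩ := exists_ne (1 : G₁)
  have hprim : ∃ ζ : ℂˣ, IsPrimitiveRoot ζ (Nat.card G₁) := by
    have hpr := Complex.isPrimitiveRoot_exp (Nat.card G₁) Nat.card_pos.ne'
    exact ⟨(hpr.isUnit (Nat.card_pos (α := G₁)).ne').unit, hpr.isUnit_unit (Nat.card_pos (α := G₁)).ne'⟩
  obtain ⟨φ, hφ⟩ := IsCyclic.exists_apply_ne_one hprim ha₀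
  set χ : G₁ →* ℂ := (Units.coeHom ℂ).comp φ with hχ
  have hχa₀ : χ a₀ ≠ 1 := fun hh =>
    hφ (Units.ext (by rw [Units.val_one]; exact hh))
  -- generator of G₁
  obtain ⟨g₁, hg₁⟩ := IsCyclic.exists_generator (α := G₁)
  have hog : orderOf g₁ ∣ n := orderOf_dvd_card
  -- key: every maximal cyclic subgroup contains G₁ × 1
  have key : ∀ C : Subgroup (G₁ × G₂), IsMaximalCyclic C →
      ∀ a : G₁, ((a, 1) : G₁ × G₂) ∈ C := by
    intro C hC a
    obtain ⟨hcyc, hmax⟩ := hC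
    obtain ⟨z, hz⟩ := @IsCyclic.exists_generator _ _ hcyc
    have hCz : C = Subgroup.zpowers (z : G₁ × G₂) := by
      apply le_antisymm
      · intro y hy
        obtain ⟨k, hk⟩ := hz ⟨y, hy⟩
        exact ⟨k, by simpa using congrArg Subtype.val hk⟩
      · exact Subgroup.zpowers_le.mpr z.2
    set b₂ : G₂ := (z : G₁ × G₂).2 with hb₂
    have hcop : Nat.Coprime n (orderOf b₂) :=
      Nat.Coprime.coprime_dvd_right orderOf_dvd_card h
    -- C ≤ zpowers (g₁, b₂)
    have hle : C ≤ Subgroup.zpowers ((g₁, b₂) : G₁ × G₂) := by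
      rw [hCz]
      apply Subgroup.zpowers_le.mpr
      obtain ⟨r, hr⟩ := (Submonoid.mem_powers_iff _ _).mp
        (mem_powers_iff_mem_zpowers.mpr (hg₁ (z : G₁ × G₂).1))
      obtain ⟨k, hk1, hk2⟩ := Nat.chineseRemainder hcop r 1
      refine ⟨(k : ℤ), ?_⟩
      have e1 : g₁ ^ k = (z : G₁ × G₂).1 := by
        rw [← hr]
        exact pow_eq_pow_iff_modEq.mpr (hk1.of_dvd hog)
      have e2 : b₂ ^ k = b₂ := by
        have h2 : b₂ ^ k = b₂ ^ 1 := pow_eq_pow_iff_modEq.mpr hk2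
        simpa using h2
      show ((g₁, b₂) : G₁ × G₂) ^ (k : ℤ) = (z : G₁ × G₂)
      rw [zpow_natCast, Prod.pow_mk, e1, e2]
    have hCeq : C = Subgroup.zpowers ((g₁, b₂) : G₁ × G₂) := by
      refine hmax _ ?_ hle
      refine ⟨⟨⟨(g₁, b₂), Subgroup.mem_zpowers _⟩, fun x => ?_⟩⟩
      obtain ⟨k, hk⟩ := x.2
      exact ⟨k, Subtype.ext (by simpa using hk)⟩
    rw [hCeq]
    obtain ⟨r, hr⟩ := (Submonoid.mem_powers_iff _ _).mp
      (mem_powers_iff_mem_zpowers.mpr (hg₁ a))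
    obtain ⟨k, hk1, hk2⟩ := Nat.chineseRemainder hcop r 0
    refine ⟨(k : ℤ), ?_⟩
    have e1 : g₁ ^ k = a := by
      rw [← hr]; exact pow_eq_pow_iff_modEq.mpr (hk1.of_dvd hog)
    have e2 : b₂ ^ k = 1 := by
      have h2 : b₂ ^ k = b₂ ^ 0 := pow_eq_pow_iff_modEq.mpr hk2
      simpa using h2
    show ((g₁, b₂) : G₁ × G₂) ^ (k : ℤ) = ((a, 1) : G₁ × G₂)
    rw [zpow_natCast, Prod.pow_mk, e1, e2]
  refine ⟨fun y => χ y.1, ?_, ?_⟩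
  · intro hf
    have h0 : χ a₀ = 0 := congrFun hf (a₀, 1)
    simp only [hχ, MonoidHom.comp_apply, Units.coeHom_apply] at h0
    exact Units.ne_zero _ h0
  · intro C hC x
    haveI : Fintype (C : Set (G₁ × G₂)) := Fintype.ofFinite _
    have hfin : ((C : Set (G₁ × G₂)).toFinite.toFinset : Finset (G₁ × G₂))
        = (C : Set (G₁ × G₂)).toFinset := Set.Finite.toFinset_eq_toFinset _
    rw [hfin]
    set ψ : ↥C →* ℂ := χ.comp ((MonoidHom.fst G₁ G₂).comp C.subtype) with hψ
    have hψne : ψ ≠ 1 := by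
      intro hone
      have := congrFun (congrArg DFunLike.coe hone) ⟨(a₀, 1), key C hC a₀⟩
      exact hχa₀ this
    have hsum : ∑ c : ↥C, ψ c = 0 := sum_hom_units_eq_zero ψ hψne
    calc ∑ c ∈ (C : Set (G₁ × G₂)).toFinset, χ (x * c).1
        = ∑ c ∈ (C : Set (G₁ × G₂)).toFinset, χ x.1 * χ c.1 := by
          apply Finset.sum_congr rfl; intro c _; rw [Prod.fst_mul, map_mul]
      _ = χ x.1 * ∑ c ∈ (C : Set (G₁ × G₂)).toFinset, χ c.1 := by
          rw [Finset.mul_sum]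
      _ = χ x.1 * ∑ c : ↥C, ψ c := by
          rw [← Finset.sum_set_coe (f := fun c : G₁ × G₂ => χ c.1)]; rfl
      _ = 0 := by rw [hsum, mul_zero]
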